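/- Let β : ℝ → ℝ satisfy hypothesis (H_β), let m > 0 and 0 < λ ≤ Λ. Let Ω ⊆ ℝⁿ be open, u : Ω → ℝ twice continuously differentiable, x ∈ Ω with u(x) ≥ 0, and set w = Ψ ∘ u where Ψ(u) = ∫_0^u exp(−m ∫_0^s β(t) dt) ds. Then 𝓜⁺(D²u(x)) − m Λ β(u(x)) ‖∇u(x)‖² ≤ 𝓜⁺(D²w(x)) / Ψ'(u(x)) ≤ 𝓜⁺(D²u(x)) − m λ β(u(x)) ‖∇u(x)‖², and the same two inequalities hold with 𝓜⁻ in place of 𝓜⁺. -/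

import Mathlib

open MeasureTheory Filter Set
open Matrix

/-- The integro-exponential change of variables `Ψ(u) = ∫₀ᵘ exp(−m ∫₀ˢ β(t) dt) ds`. -/
noncomputable def PsiFun (β : ℝ → ℝ) (m : ℝ) (u : ℝ) : ℝ :=
  ∫ s in (0:ℝ)..u, Real.exp (-(m * ∫ t in (0:ℝ)..s, β t))

/-- Its derivative `Ψ'(u) = exp(−m ∫₀ᵘ β(t) dt)`. -/
noncomputable def PsiFun' (β : ℝ → ℝ) (m : ℝ) (u : ℝ) : ℝ :=
  Real.exp (-(m * ∫ t in (0:ℝ)..u, β t))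

/-- The admissible set for the Pucci extremal operators: real symmetric matrices `A`
with `λI ≤ A ≤ ΛI` in the Loewner (positive-semidefinite) order. -/
def pucciSet (n : ℕ) (lam Lam : ℝ) : Set (Matrix (Fin n) (Fin n) ℝ) :=
  {A | (A - lam • (1 : Matrix (Fin n) (Fin n) ℝ)).PosSemidef ∧
       (Lam • (1 : Matrix (Fin n) (Fin n) ℝ) - A).PosSemidef}

/-- Pucci maximal operator `𝓜⁺(X) = sup { tr(A X) : λI ≤ A ≤ ΛI }`. -/
noncomputable def pucciPlus (n : ℕ) (lam Lam : ℝ) (X : Matrix (Fin n) (Fin n) ℝ) : ℝ :=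
  sSup ((fun A => Matrix.trace (A * X)) '' pucciSet n lam Lam)

/-- Pucci minimal operator `𝓜⁻(X) = inf { tr(A X) : λI ≤ A ≤ ΛI }`. -/
noncomputable def pucciMinus (n : ℕ) (lam Lam : ℝ) (X : Matrix (Fin n) (Fin n) ℝ) : ℝ :=
  sInf ((fun A => Matrix.trace (A * X)) '' pucciSet n lam Lam)

/-- The Hessian matrix `D²u(x)` of a real-valued function on Euclidean space. -/
noncomputable def hess (n : ℕ) (u : EuclideanSpace ℝ (Fin n) → ℝ)
    (x : EuclideanSpace ℝ (Fin n)) : Matrix (Fin n) (Fin n) ℝ :=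
  Matrix.of fun i j =>
    fderiv ℝ (fderiv ℝ u) x (EuclideanSpace.single i 1) (EuclideanSpace.single j 1)

section psiAux
variable {β : ℝ → ℝ} {m : ℝ}

lemma F_hasDerivAt (hβ : Continuous β) (s : ℝ) :
    HasDerivAt (fun y => ∫ t in (0:ℝ)..y, β t) (β s) s :=
  intervalIntegral.integral_hasDerivAt_right (hβ.intervalIntegrable 0 s)
    (hβ.stronglyMeasurableAtFilter _ _) hβ.continuousAt

lemma psi'_hasDerivAt (hβ : Continuous β) (s : ℝ) :
    HasDerivAt (PsiFun' β m) (-(m * β s) * PsiFun' β m s) s := by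
  have h := (((F_hasDerivAt hβ s).const_mul m).neg).exp
  rw [show PsiFun' β m = fun u => Real.exp (-(m * ∫ t in (0:ℝ)..u, β t)) from rfl]
  simpa [PsiFun', mul_comm] using h

lemma psi'_continuous (hβ : Continuous β) : Continuous (PsiFun' β m) :=
  continuous_iff_continuousAt.2 fun s => ((psi'_hasDerivAt hβ s).differentiableAt).continuousAt

lemma psi'_pos (s : ℝ) : 0 < PsiFun' β m s := Real.exp_pos _

lemma psi_hasDerivAt (hβ : Continuous β) (s : ℝ) :
    HasDerivAt (PsiFun β m) (PsiFun' β m s) s :=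
  intervalIntegral.integral_hasDerivAt_right ((psi'_continuous hβ).intervalIntegrable 0 s)
    ((psi'_continuous hβ).stronglyMeasurableAtFilter _ _) (psi'_continuous hβ).continuousAt

end psiAux

section pucciAux
variable {n : ℕ} {lam Lam : ℝ}

lemma pucciSet_nonempty (hle : lam ≤ Lam) : (pucciSet n lam Lam).Nonempty := by
  refine ⟨lam • 1, ?_, ?_⟩
  · simpa using Matrix.PosSemidef.zero
  · rw [← sub_smul]
    refine Matrix.PosSemidef.of_dotProduct_mulVec_nonneg ?_ fun x => ?_
    · simp [Matrix.IsHermitian, Matrix.conjTranspose_smul]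
    · simp only [Matrix.smul_mulVec, Matrix.one_mulVec, dotProduct_smul,
        smul_eq_mul, star_trivial]
      have h0 : (0:ℝ) ≤ x ⬝ᵥ x :=
        Finset.sum_nonneg fun i _ => mul_self_nonneg (x i)
      nlinarith

lemma psd_quad {B : Matrix (Fin n) (Fin n) ℝ} (hB : B.PosSemidef) (v : Fin n → ℝ) :
    0 ≤ v ⬝ᵥ B.mulVec v := by
  simpa using hB.dotProduct_mulVec_nonneg v

lemma psd_entry_pair {B : Matrix (Fin n) (Fin n) ℝ} (hB : B.PosSemidef) (i j : Fin n)
    (a b : ℝ) : 0 ≤ a * (a * B i i + b * B i j) + b * (a * B j i + b * B j j) := by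
  have h := psd_quad hB (a • (Pi.single i 1 : Fin n → ℝ) + b • (Pi.single j 1 : Fin n → ℝ))
  simp only [Matrix.mulVec_add, Matrix.mulVec_smul, Matrix.mulVec_single_one, Matrix.col_apply,
    add_dotProduct, smul_dotProduct, single_dotProduct,
    dotProduct_add, dotProduct_smul, mul_one, Pi.add_apply, Pi.smul_apply,
    smul_eq_mul] at h
  nlinarith [h]

lemma psd_diag {B : Matrix (Fin n) (Fin n) ℝ} (hB : B.PosSemidef) (i : Fin n) :
    0 ≤ B i i := by nlinarith [psd_entry_pair hB i i 1 0]

lemma psd_offdiag {B : Matrix (Fin n) (Fin n) ℝ} (hB : B.PosSemidef) (i j : Fin n) :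
    |B i j| ≤ (B i i + B j j) / 2 := by
  have hsym : B j i = B i j := by
    have := hB.1
    have h2 := congrFun (congrFun this j) i
    exact (by simpa [Matrix.conjTranspose_apply] using h2 : B i j = B j i).symm
  have h1 := psd_entry_pair hB i j 1 1
  have h2 := psd_entry_pair hB i j 1 (-1)
  rw [abs_le]; constructor <;> nlinarith

lemma pucci_entry_bound (hlam : 0 < lam) {A : Matrix (Fin n) (Fin n) ℝ}
    (hA : A ∈ pucciSet n lam Lam) (i j : Fin n) : |A i j| ≤ Lam := by
  obtain ⟨h1, h2⟩ := hA
  have hdiag : ∀ k, lam ≤ A k k ∧ A k k ≤ Lam := by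
    intro k
    have d1 := psd_diag h1 k
    have d2 := psd_diag h2 k
    simp [Matrix.sub_apply, Matrix.smul_apply, Matrix.one_apply] at d1 d2
    constructor <;> linarith
  rcases eq_or_ne i j with rfl | hij
  · have := hdiag i
    rw [abs_le]; constructor <;> linarith
  · have h := psd_offdiag h1 i j
    have e1 : (A - lam • (1 : Matrix (Fin n) (Fin n) ℝ)) i j = A i j := by
      simp [Matrix.sub_apply, Matrix.smul_apply, Matrix.one_apply, hij]
    have e2 : (A - lam • (1 : Matrix (Fin n) (Fin n) ℝ)) i i = A i i - lam := by
      simp [Matrix.sub_apply, Matrix.smul_apply, Matrix.one_apply]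
    have e3 : (A - lam • (1 : Matrix (Fin n) (Fin n) ℝ)) j j = A j j - lam := by
      simp [Matrix.sub_apply, Matrix.smul_apply, Matrix.one_apply]
    rw [e1, e2, e3] at h
    have hi := hdiag i; have hj := hdiag j
    calc |A i j| ≤ (A i i - lam + (A j j - lam)) / 2 := h
      _ ≤ Lam := by linarith [hi.1, hi.2, hj.1, hj.2]

lemma pucci_trace_bound (hlam : 0 < lam) {A : Matrix (Fin n) (Fin n) ℝ}
    (hA : A ∈ pucciSet n lam Lam) (X : Matrix (Fin n) (Fin n) ℝ) :
    |Matrix.trace (A * X)| ≤ Lam * ∑ i, ∑ j, |X j i| := by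
  calc |Matrix.trace (A * X)| = |∑ i, ∑ j, A i j * X j i| := by
        simp [Matrix.trace, Matrix.mul_apply, Matrix.diag]
    _ ≤ ∑ i, ∑ j, |A i j * X j i| := by
        refine (Finset.abs_sum_le_sum_abs _ _).trans ?_
        exact Finset.sum_le_sum fun i _ => Finset.abs_sum_le_sum_abs _ _
    _ ≤ ∑ i, ∑ j, Lam * |X j i| := by
        refine Finset.sum_le_sum fun i _ => Finset.sum_le_sum fun j _ => ?_
        rw [abs_mul]
        exact mul_le_mul_of_nonneg_right (pucci_entry_bound hlam hA i j) (abs_nonneg _)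
    _ = Lam * ∑ i, ∑ j, |X j i| := by rw [Finset.mul_sum]; simp [Finset.mul_sum]

lemma pucci_bddAbove (hlam : 0 < lam) (X : Matrix (Fin n) (Fin n) ℝ) :
    BddAbove ((fun A => Matrix.trace (A * X)) '' pucciSet n lam Lam) := by
  refine ⟨Lam * ∑ i, ∑ j, |X j i|, ?_⟩
  rintro y ⟨A, hA, rfl⟩
  exact (le_abs_self _).trans (pucci_trace_bound hlam hA X)

lemma pucci_bddBelow (hlam : 0 < lam) (X : Matrix (Fin n) (Fin n) ℝ) :
    BddBelow ((fun A => Matrix.trace (A * X)) '' pucciSet n lam Lam) := by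
  refine ⟨-(Lam * ∑ i, ∑ j, |X j i|), ?_⟩
  rintro y ⟨A, hA, rfl⟩
  linarith [abs_le.mp (pucci_trace_bound hlam hA X)]

lemma trace_mul_vecMulVec (A : Matrix (Fin n) (Fin n) ℝ) (g : Fin n → ℝ) :
    Matrix.trace (A * Matrix.vecMulVec g g) = g ⬝ᵥ A *ᵥ g := by
  simp only [Matrix.trace, Matrix.diag, Matrix.mul_apply, Matrix.vecMulVec_apply,
    dotProduct, Matrix.mulVec, Finset.mul_sum]
  congr 1; ext i; congr 1; ext j; ring

lemma pucci_quad_bounds {A : Matrix (Fin n) (Fin n) ℝ} (hA : A ∈ pucciSet n lam Lam)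
    (g : Fin n → ℝ) :
    lam * (g ⬝ᵥ g) ≤ g ⬝ᵥ A *ᵥ g ∧ g ⬝ᵥ A *ᵥ g ≤ Lam * (g ⬝ᵥ g) := by
  have h1 := hA.1.dotProduct_mulVec_nonneg g
  have h2 := hA.2.dotProduct_mulVec_nonneg g
  simp only [Matrix.sub_mulVec, Matrix.smul_mulVec, Matrix.one_mulVec,
    dotProduct_sub, dotProduct_smul, smul_eq_mul, star_trivial] at h1 h2
  constructor <;> linarith

lemma trace_mul_smul_right (A : Matrix (Fin n) (Fin n) ℝ) (c : ℝ) (X : Matrix (Fin n) (Fin n) ℝ) :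
    Matrix.trace (A * (c • X)) = c * Matrix.trace (A * X) := by
  rw [Matrix.mul_smul, Matrix.trace_smul]; rfl

lemma htr_shift (X : Matrix (Fin n) (Fin n) ℝ) (g : Fin n → ℝ) (t : ℝ)
    (A : Matrix (Fin n) (Fin n) ℝ) :
    Matrix.trace (A * (X + t • Matrix.vecMulVec g g)) =
      Matrix.trace (A * X) + t * (g ⬝ᵥ A *ᵥ g) := by
  rw [Matrix.mul_add, Matrix.trace_add, trace_mul_smul_right, trace_mul_vecMulVec]

lemma pucciPlus_shift (hlam : 0 < lam) (hle : lam ≤ Lam) (X : Matrix (Fin n) (Fin n) ℝ)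
    (g : Fin n → ℝ) (t : ℝ) (ht : t ≤ 0) :
    pucciPlus n lam Lam X + t * Lam * (g ⬝ᵥ g) ≤
        pucciPlus n lam Lam (X + t • Matrix.vecMulVec g g) ∧
      pucciPlus n lam Lam (X + t • Matrix.vecMulVec g g) ≤
        pucciPlus n lam Lam X + t * lam * (g ⬝ᵥ g) := by
  have hne := pucciSet_nonempty (n := n) hle
  constructor
  · have h : pucciPlus n lam Lam X ≤
        pucciPlus n lam Lam (X + t • Matrix.vecMulVec g g) - t * Lam * (g ⬝ᵥ g) := by
      apply csSup_le (hne.image _)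
      rintro y ⟨A, hA, rfl⟩
      have hmem : Matrix.trace (A * (X + t • Matrix.vecMulVec g g)) ≤
          pucciPlus n lam Lam (X + t • Matrix.vecMulVec g g) :=
        le_csSup (pucci_bddAbove hlam _) ⟨A, hA, rfl⟩
      have hq := (pucci_quad_bounds hA g).2
      have h2 : t * (Lam * (g ⬝ᵥ g)) ≤ t * (g ⬝ᵥ A *ᵥ g) :=
        mul_le_mul_of_nonpos_left hq ht
      have h3 := htr_shift X g t A
      simp only at h3 ⊢
      nlinarith [hmem, h2, h3]
    linarith
  · apply csSup_le (hne.image _)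
    rintro y ⟨A, hA, rfl⟩
    have hmem : Matrix.trace (A * X) ≤ pucciPlus n lam Lam X :=
      le_csSup (pucci_bddAbove hlam _) ⟨A, hA, rfl⟩
    have hq := (pucci_quad_bounds hA g).1
    have h2 : t * (g ⬝ᵥ A *ᵥ g) ≤ t * (lam * (g ⬝ᵥ g)) :=
      mul_le_mul_of_nonpos_left hq ht
    have h3 := htr_shift X g t A
    simp only at h3 ⊢
    nlinarith [hmem, h2, h3]

lemma pucciMinus_shift (hlam : 0 < lam) (hle : lam ≤ Lam) (X : Matrix (Fin n) (Fin n) ℝ)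
    (g : Fin n → ℝ) (t : ℝ) (ht : t ≤ 0) :
    pucciMinus n lam Lam X + t * Lam * (g ⬝ᵥ g) ≤
        pucciMinus n lam Lam (X + t • Matrix.vecMulVec g g) ∧
      pucciMinus n lam Lam (X + t • Matrix.vecMulVec g g) ≤
        pucciMinus n lam Lam X + t * lam * (g ⬝ᵥ g) := by
  have hne := pucciSet_nonempty (n := n) hle
  constructor
  · apply le_csInf (hne.image _)
    rintro y ⟨A, hA, rfl⟩
    have hmem : pucciMinus n lam Lam X ≤ Matrix.trace (A * X) :=
      csInf_le (pucci_bddBelow hlam _) ⟨A, hA, rfl⟩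
    have hq := (pucci_quad_bounds hA g).2
    have h2 : t * (Lam * (g ⬝ᵥ g)) ≤ t * (g ⬝ᵥ A *ᵥ g) :=
      mul_le_mul_of_nonpos_left hq ht
    have h3 := htr_shift X g t A
    simp only at h3 ⊢
    nlinarith [hmem, h2, h3]
  · have h : pucciMinus n lam Lam (X + t • Matrix.vecMulVec g g) - t * lam * (g ⬝ᵥ g) ≤
        pucciMinus n lam Lam X := by
      apply le_csInf (hne.image _)
      rintro y ⟨A, hA, rfl⟩
      have hmem : pucciMinus n lam Lam (X + t • Matrix.vecMulVec g g) ≤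
          Matrix.trace (A * (X + t • Matrix.vecMulVec g g)) :=
        csInf_le (pucci_bddBelow hlam _) ⟨A, hA, rfl⟩
      have hq := (pucci_quad_bounds hA g).1
      have h2 : t * (g ⬝ᵥ A *ᵥ g) ≤ t * (lam * (g ⬝ᵥ g)) :=
        mul_le_mul_of_nonpos_left hq ht
      have h3 := htr_shift X g t A
      simp only at h3 ⊢
      nlinarith [hmem, h2, h3]
    linarith

lemma pucciPlus_smul (hlam : 0 < lam) (hle : lam ≤ Lam) {c : ℝ} (hc : 0 < c)
    (X : Matrix (Fin n) (Fin n) ℝ) :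
    pucciPlus n lam Lam (c • X) = c * pucciPlus n lam Lam X := by
  have hne := pucciSet_nonempty (n := n) hle
  have himg : (fun A => Matrix.trace (A * (c • X))) '' pucciSet n lam Lam
      = (fun y => c * y) '' ((fun A => Matrix.trace (A * X)) '' pucciSet n lam Lam) := by
    rw [Set.image_image]
    exact Set.image_congr fun A _ => trace_mul_smul_right A c X
  have hlub : IsLUB ((fun A => Matrix.trace (A * X)) '' pucciSet n lam Lam)
      (pucciPlus n lam Lam X) := isLUB_csSup (hne.image _) (pucci_bddAbove hlam X)
  have h2 : IsLUB ((fun y => c * y) '' ((fun A => Matrix.trace (A * X)) '' pucciSet n lam Lam))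
      (c * pucciPlus n lam Lam X) := by
    simpa using (OrderIso.mulLeft₀ c hc).isLUB_image'.2 hlub
  rw [pucciPlus, himg]
  exact h2.csSup_eq ((hne.image _).image _)

lemma pucciMinus_smul (hlam : 0 < lam) (hle : lam ≤ Lam) {c : ℝ} (hc : 0 < c)
    (X : Matrix (Fin n) (Fin n) ℝ) :
    pucciMinus n lam Lam (c • X) = c * pucciMinus n lam Lam X := by
  have hne := pucciSet_nonempty (n := n) hle
  have himg : (fun A => Matrix.trace (A * (c • X))) '' pucciSet n lam Lam
      = (fun y => c * y) '' ((fun A => Matrix.trace (A * X)) '' pucciSet n lam Lam) := by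
    rw [Set.image_image]
    exact Set.image_congr fun A _ => trace_mul_smul_right A c X
  have hglb : IsGLB ((fun A => Matrix.trace (A * X)) '' pucciSet n lam Lam)
      (pucciMinus n lam Lam X) := isGLB_csInf (hne.image _) (pucci_bddBelow hlam X)
  have h2 : IsGLB ((fun y => c * y) '' ((fun A => Matrix.trace (A * X)) '' pucciSet n lam Lam))
      (c * pucciMinus n lam Lam X) := by
    simpa using (OrderIso.mulLeft₀ c hc).isGLB_image'.2 hglb
  rw [pucciMinus, himg]
  exact h2.csInf_eq ((hne.image _).image _)

end pucciAux

section calcAux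
variable {n : ℕ} {β : ℝ → ℝ} {m : ℝ}

lemma hess_comp (hβ : Continuous β)
    (Ω : Set (EuclideanSpace ℝ (Fin n))) (hΩ : IsOpen Ω)
    (u : EuclideanSpace ℝ (Fin n) → ℝ) (hu : ContDiffOn ℝ 2 u Ω)
    (x : EuclideanSpace ℝ (Fin n)) (hx : x ∈ Ω) :
    hess n (fun y => PsiFun β m (u y)) x =
      PsiFun' β m (u x) • (hess n u x +
        (-(m * β (u x))) • Matrix.vecMulVec
          (fun i => fderiv ℝ u x (EuclideanSpace.single i 1))
          (fun i => fderiv ℝ u x (EuclideanSpace.single i 1))) := by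
  have hdu : ∀ y ∈ Ω, HasFDerivAt u (fderiv ℝ u y) y := fun y hy =>
    ((hu.differentiableOn (by norm_num)).differentiableAt (hΩ.mem_nhds hy)).hasFDerivAt
  set w : EuclideanSpace ℝ (Fin n) → ℝ := fun y => PsiFun β m (u y) with hw
  have hwd : ∀ y ∈ Ω, HasFDerivAt w (PsiFun' β m (u y) • fderiv ℝ u y) y := fun y hy =>
    (psi_hasDerivAt hβ (u y)).comp_hasFDerivAt y (hdu y hy)
  have heq : fderiv ℝ w =ᶠ[nhds x] fun y => PsiFun' β m (u y) • fderiv ℝ u y := by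
    filter_upwards [hΩ.mem_nhds hx] with y hy using (hwd y hy).fderiv
  have hc : HasFDerivAt (fun y => PsiFun' β m (u y))
      ((-(m * β (u x)) * PsiFun' β m (u x)) • fderiv ℝ u x) x :=
    (psi'_hasDerivAt hβ (u x)).comp_hasFDerivAt x (hdu x hx)
  have hf : HasFDerivAt (fderiv ℝ u) (fderiv ℝ (fderiv ℝ u) x) x := by
    have h1 : ContDiffOn ℝ 1 (fderiv ℝ u) Ω := hu.fderiv_of_isOpen hΩ (by norm_num)
    exact ((h1.differentiableOn (by norm_num)).differentiableAt
      (hΩ.mem_nhds hx)).hasFDerivAt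
  have hprod := hc.smul hf
  have hkey : fderiv ℝ (fderiv ℝ w) x =
      PsiFun' β m (u x) • fderiv ℝ (fderiv ℝ u) x +
        ((-(m * β (u x)) * PsiFun' β m (u x)) • fderiv ℝ u x).smulRight (fderiv ℝ u x) := by
    rw [heq.fderiv_eq]
    exact hprod.fderiv
  ext i j
  simp only [hess, Matrix.of_apply, hkey, ContinuousLinearMap.add_apply,
    ContinuousLinearMap.coe_smul', Pi.smul_apply, ContinuousLinearMap.smulRight_apply,
    ContinuousLinearMap.smul_apply, smul_eq_mul, Matrix.smul_apply, Matrix.add_apply,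
    Matrix.vecMulVec_apply]
  ring

lemma grad_norm_sq (u : EuclideanSpace ℝ (Fin n) → ℝ) (x : EuclideanSpace ℝ (Fin n)) :
    ‖gradient u x‖ ^ 2 =
      (fun i => fderiv ℝ u x (EuclideanSpace.single i 1)) ⬝ᵥ
        (fun i => fderiv ℝ u x (EuclideanSpace.single i 1)) := by
  have hcoord : ∀ i, gradient u x i = fderiv ℝ u x (EuclideanSpace.single i 1) := by
    intro i
    have h1 : inner ℝ (gradient u x) (EuclideanSpace.single i (1:ℝ)) =
        fderiv ℝ u x (EuclideanSpace.single i 1) := by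
      rw [gradient]
      exact InnerProductSpace.toDual_symm_apply
    rw [← h1, EuclideanSpace.inner_single_right]
    simp [real_inner_comm]
  have h2 : ‖gradient u x‖ ^ 2 = inner ℝ (gradient u x) (gradient u x) :=
    (real_inner_self_eq_norm_sq _).symm
  rw [h2, PiLp.inner_apply]
  simp only [RCLike.inner_apply, conj_trivial, dotProduct]
  exact Finset.sum_congr rfl fun i _ => by rw [hcoord i]

end calcAux

theorem stmt8 (n : ℕ) (β : ℝ → ℝ) (m lam Lam : ℝ) (hm : 0 < m)
    (hlam : 0 < lam) (hle : lam ≤ Lam)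
    (hodd : ∀ s, β (-s) = -β s)
    (hlip : LocallyLipschitz β)
    (hmono : Monotone β)
    (hsign : ∀ s, 0 ≤ β s * s)
    (htop : Tendsto β atTop atTop)
    (Ω : Set (EuclideanSpace ℝ (Fin n))) (hΩ : IsOpen Ω)
    (u : EuclideanSpace ℝ (Fin n) → ℝ) (hu : ContDiffOn ℝ 2 u Ω)
    (x : EuclideanSpace ℝ (Fin n)) (hx : x ∈ Ω) (hux : 0 ≤ u x) :
    (pucciPlus n lam Lam (hess n u x) - m * Lam * β (u x) * ‖gradient u x‖ ^ 2 ≤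
        pucciPlus n lam Lam (hess n (fun y => PsiFun β m (u y)) x) / PsiFun' β m (u x) ∧
      pucciPlus n lam Lam (hess n (fun y => PsiFun β m (u y)) x) / PsiFun' β m (u x) ≤
        pucciPlus n lam Lam (hess n u x) - m * lam * β (u x) * ‖gradient u x‖ ^ 2) ∧
    (pucciMinus n lam Lam (hess n u x) - m * Lam * β (u x) * ‖gradient u x‖ ^ 2 ≤
        pucciMinus n lam Lam (hess n (fun y => PsiFun β m (u y)) x) / PsiFun' β m (u x) ∧
      pucciMinus n lam Lam (hess n (fun y => PsiFun β m (u y)) x) / PsiFun' β m (u x) ≤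
        pucciMinus n lam Lam (hess n u x) - m * lam * β (u x) * ‖gradient u x‖ ^ 2) := by
  have hβc : Continuous β := hlip.continuous
  set g : Fin n → ℝ := fun i => fderiv ℝ u x (EuclideanSpace.single i 1) with hg
  set t : ℝ := -(m * β (u x)) with htdef
  have hβ0 : 0 ≤ β (u x) := by
    have h0 : β 0 = 0 := by have := hodd 0; simp at this; linarith
    have := hmono hux
    linarith
  have ht : t ≤ 0 := by
    have : 0 ≤ m * β (u x) := mul_nonneg hm.le hβ0
    simp [htdef]; linarith
  have hΨ : 0 < PsiFun' β m (u x) := psi'_pos _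
  have hhess := hess_comp (m := m) hβc Ω hΩ u hu x hx
  have hgn := grad_norm_sq u x
  set X := hess n u x
  set M := X + t • Matrix.vecMulVec g g with hM
  have hplus := pucciPlus_shift (n := n) hlam hle X g t ht
  have hminus := pucciMinus_shift (n := n) hlam hle X g t ht
  have hdivP : pucciPlus n lam Lam (hess n (fun y => PsiFun β m (u y)) x) / PsiFun' β m (u x)
      = pucciPlus n lam Lam M := by
    rw [hhess, pucciPlus_smul hlam hle hΨ]
    field_simp
  have hdivM : pucciMinus n lam Lam (hess n (fun y => PsiFun β m (u y)) x) / PsiFun' β m (u x)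
      = pucciMinus n lam Lam M := by
    rw [hhess, pucciMinus_smul hlam hle hΨ]
    field_simp
  rw [hdivP, hdivM, hgn]
  have e1 : t * Lam * (g ⬝ᵥ g) = -(m * Lam * β (u x) * (g ⬝ᵥ g)) := by rw [htdef]; ring
  have e2 : t * lam * (g ⬝ᵥ g) = -(m * lam * β (u x) * (g ⬝ᵥ g)) := by rw [htdef]; ring
  refine ⟨⟨?_, ?_⟩, ?_, ?_⟩ <;>
    [linarith [hplus.1, e1.le]; linarith [hplus.2, e2.ge]; linarith [hminus.1, e1.le];
      linarith [hminus.2, e2.ge]]
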